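/- Let V be a finite-dimensional real normed space. Then there is a unique maximal subspace W isometrically isomorphic to ℓ∞^d for some d ≥ 0 with the property that there is a subspace U with V = U ⊕ W and ‖u + w‖ = max(‖u‖, ‖w‖) for all u ∈ U and w ∈ W. Moreover, if v_1, …, v_d are all the ℓ∞-directions of V with corresponding subspaces U_1, …, U_d, then W = span{v_1, …, v_d} and U = U_1 ∩ … ∩ U_d. -/

import Mathlib

/-- `v` is an ℓ∞-direction of `V` with corresponding subspace `U`: `v` is a unit
vector, `V = span{v} ⊕ U` (algebraic direct sum), and
`‖α • v + u‖ = max |α| ‖u‖` for all `α : ℝ` and `u ∈ U`. -/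
def IsLinftyDirection {V : Type*} [NormedAddCommGroup V] [NormedSpace ℝ V]
    (v : V) (U : Submodule ℝ V) : Prop :=
  ‖v‖ = 1 ∧ IsCompl (Submodule.span ℝ {v}) U ∧
    ∀ (α : ℝ), ∀ u ∈ U, ‖α • v + u‖ = max |α| ‖u‖

lemma realKeyAux (β γ c c'' : ℝ) (hc : 0 ≤ c) (hc'' : 0 ≤ c'')
    (h1 : max |β| c = 1) (h2 : max |γ| c'' = 1)
    (H : ∀ s t : ℝ, max |s + t * β| (|t| * c) = max |t + s * γ| (|s| * c''))
    (hβ : 0 ≤ β) : β = 0 ∨ c = 0 := by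
  by_contra h
  push_neg at h
  obtain ⟨hβ0, hc0⟩ := h
  have hβpos : 0 < β := lt_of_le_of_ne hβ (Ne.symm hβ0)
  have hcpos : 0 < c := lt_of_le_of_ne hc (Ne.symm hc0)
  have hβ1 : β ≤ 1 := by
    have h' := le_max_left |β| c; rw [h1] at h'; rwa [abs_of_nonneg hβ] at h'
  have hc1 : c ≤ 1 := by have := le_max_right |β| c; rw [h1] at this; linarith
  have hγ1 : |γ| ≤ 1 := by have := le_max_left |γ| c''; rw [h2] at this; linarith
  have hγ1' := abs_le.mp hγ1
  have hc''1 : c'' ≤ 1 := by have := le_max_right |γ| c''; rw [h2] at this; linarith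
  rcases lt_or_eq_of_le hc1 with hclt | hceq
  · -- c < 1, so β = 1
    have hβeq : β = 1 := by
      rcases max_cases |β| c with ⟨h', h''⟩ | ⟨h', h''⟩ <;> rw [h'] at h1
      · rwa [abs_of_nonneg hβ] at h1
      · linarith
    -- H (-1) 1 : LHS = c
    have l1 : max |(-1) + 1 * β| (|(1:ℝ)| * c) = c := by
      rw [hβeq, show (-1:ℝ) + 1 * 1 = 0 by ring, abs_zero, abs_one, one_mul]
      exact max_eq_right hc
    have k : c = max |1 + (-1) * γ| (|(-1:ℝ)| * c'') := by rw [← H (-1) 1, l1]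
    have k1 : |1 + (-1) * γ| ≤ c := by rw [k]; exact le_max_left _ _
    have k2 : c'' ≤ c := by
      have := le_max_right |1 + (-1) * γ| (|(-1:ℝ)| * c'')
      rw [← k, abs_neg, abs_one, one_mul] at this; exact this
    have k1' := abs_le.mp k1
    have hγpos : 0 < γ := by nlinarith
    have hγeq : γ = 1 := by
      rcases max_cases |γ| c'' with ⟨h', h''⟩ | ⟨h', h''⟩ <;> rw [h'] at h2
      · rwa [abs_of_pos hγpos] at h2
      · linarith
    -- H (c/2 - 1) 1 : contradiction
    have l2 : max |(c/2 - 1) + 1 * β| (|(1:ℝ)| * c) = c := by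
      rw [hβeq, show (c/2 - 1) + 1 * 1 = c/2 by ring, abs_one, one_mul,
        abs_of_pos (by linarith : (0:ℝ) < c/2)]
      exact max_eq_right (by linarith)
    have k' : c = max |1 + (c/2 - 1) * γ| (|c/2 - 1| * c'') := by rw [← H (c/2 - 1) 1, l2]
    have b1 : |1 + (c/2 - 1) * γ| < c := by
      rw [hγeq, show 1 + (c/2 - 1) * 1 = c/2 by ring, abs_of_pos (by linarith : (0:ℝ) < c/2)]
      linarith
    have b2 : |c/2 - 1| * c'' < c := by
      rw [abs_of_neg (by linarith : c/2 - 1 < 0)]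
      nlinarith
    have := max_lt b1 b2
    rw [← k'] at this
    exact lt_irrefl c this
  · -- c = 1
    subst hceq
    rcases lt_or_eq_of_le hβ1 with hβlt | hβeq
    · -- β < 1 : show γ = 0
      have hγ0 : γ = 0 := by
        by_contra hγ
        rcases lt_or_gt_of_ne hγ with hγneg | hγpos
        · have k1 : |1 + (β - 1) * γ| ≤ max |(β - 1) + 1 * β| (|(1:ℝ)| * 1) := by
            rw [H (β - 1) 1]; exact le_max_left _ _
          have k2 : max |(β - 1) + 1 * β| (|(1:ℝ)| * 1) ≤ 1 := by
            apply max_le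
            · rw [show (β - 1) + 1 * β = 2 * β - 1 by ring, abs_le]
              constructor <;> linarith
            · norm_num
          have := le_abs_self (1 + (β - 1) * γ)
          nlinarith
        · have k1 : |1 + (1 - β) * γ| ≤ max |(1 - β) + 1 * β| (|(1:ℝ)| * 1) := by
            rw [H (1 - β) 1]; exact le_max_left _ _
          have k2 : max |(1 - β) + 1 * β| (|(1:ℝ)| * 1) ≤ 1 := by
            apply max_le
            · rw [show (1 - β) + 1 * β = 1 by ring]; norm_num
            · norm_num
          have := le_abs_self (1 + (1 - β) * γ)
          nlinarith
      have hc''eq : c'' = 1 := by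
        rw [hγ0, abs_zero, max_eq_right hc''] at h2; exact h2
      have k1 : |1 + 1 * β| ≤ max |1 + 1 * γ| (|(1:ℝ)| * c'') := by
        have := le_max_left |1 + 1 * β| (|(1:ℝ)| * 1)
        rw [H 1 1] at this; exact this
      have k2 : max |1 + 1 * γ| (|(1:ℝ)| * c'') ≤ 1 := by
        apply max_le
        · rw [hγ0]; norm_num
        · rw [hc''eq]; norm_num
      have := le_abs_self (1 + 1 * β)
      nlinarith
    · -- β = 1, c = 1
      subst hβeq
      have l1 : max |1 + (-2) * (1:ℝ)| (|(-2:ℝ)| * 1) = 2 := by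
        rw [show (1:ℝ) + (-2) * 1 = -1 by ring]
        norm_num
      have k : (2:ℝ) = max |(-2) + 1 * γ| (|(1:ℝ)| * c'') := by rw [← H 1 (-2), l1]
      have ka : |(-2) + 1 * γ| ≤ 2 := by
        have := le_max_left |(-2) + 1 * γ| (|(1:ℝ)| * c''); rwa [← k] at this
      have kb : |(-2) + 1 * γ| = 2 := by
        rcases max_cases |(-2) + 1 * γ| (|(1:ℝ)| * c'') with ⟨h', h''⟩ | ⟨h', h''⟩ <;>
          rw [h'] at k
        · exact k.symm
        · rw [abs_one, one_mul] at k; linarith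
      have hγeq : γ = 0 := by
        rw [abs_of_nonpos (by linarith : (-2) + 1 * γ ≤ 0)] at kb
        linarith
      have hc''eq : c'' = 1 := by
        rw [hγeq, abs_zero, max_eq_right hc''] at h2; exact h2
      have l2 : max |(2:ℝ) + 1 * 1| (|(1:ℝ)| * 1) = 3 := by norm_num
      have l3 : max |1 + 2 * γ| (|(2:ℝ)| * c'') = 2 := by
        rw [hγeq, hc''eq]; norm_num
      have := H 2 1
      rw [l2, l3] at this
      norm_num at this

lemma realKey (β γ c c'' : ℝ) (hc : 0 ≤ c) (hc'' : 0 ≤ c'')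
    (h1 : max |β| c = 1) (h2 : max |γ| c'' = 1)
    (H : ∀ s t : ℝ, max |s + t * β| (|t| * c) = max |t + s * γ| (|s| * c'')) :
    β = 0 ∨ c = 0 := by
  rcases le_or_gt 0 β with hβ | hβ
  · exact realKeyAux β γ c c'' hc hc'' h1 h2 H hβ
  · have h1' : max |(-β)| c = 1 := by rwa [abs_neg]
    have h2' : max |(-γ)| c'' = 1 := by rwa [abs_neg]
    have H' : ∀ s t : ℝ, max |s + t * (-β)| (|t| * c) = max |t + s * (-γ)| (|s| * c'') := by
      intro s t
      have h' := H s (-t)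
      rw [show s + (-t) * β = s + t * (-β) by ring, abs_neg,
          show (-t) + s * γ = -(t + s * (-γ)) by ring, abs_neg] at h'
      exact h'
    rcases realKeyAux (-β) (-γ) c c'' hc hc'' h1' h2' H' (by linarith) with h | h
    · left; linarith
    · right; exact h

section Aux

variable {V : Type*} [NormedAddCommGroup V] [NormedSpace ℝ V]

/-- decomposition along a direction -/
lemma IsLinftyDirection.decomp {v : V} {U : Submodule ℝ V}
    (h : IsLinftyDirection v U) (x : V) : ∃ (a : ℝ) (u : V), u ∈ U ∧ x = a • v + u := by
  have hx : x ∈ Submodule.span ℝ {v} ⊔ U := by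
    rw [codisjoint_iff.mp h.2.1.codisjoint]; trivial
  obtain ⟨p, hp, u, hu, hpu⟩ := Submodule.mem_sup.mp hx
  obtain ⟨a, rfl⟩ := Submodule.mem_span_singleton.mp hp
  exact ⟨a, u, hu, hpu.symm⟩

/-- key lemma: distinct ℓ∞-directions lie in each other's complements -/
lemma mem_of_ne {v w : V} {Uv Uw : Submodule ℝ V}
    (hv : IsLinftyDirection v Uv) (hw : IsLinftyDirection w Uw)
    (h1 : w ≠ v) (h2 : w ≠ -v) : w ∈ Uv := by
  obtain ⟨β, u, hu, hwd⟩ := hv.decomp w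
  obtain ⟨γ, u'', hu'', hvd⟩ := hw.decomp v
  have hn1 : max |β| ‖u‖ = 1 := by
    rw [← hv.2.2 β u hu, ← hwd, hw.1]
  have hn2 : max |γ| ‖u''‖ = 1 := by
    rw [← hw.2.2 γ u'' hu'', ← hvd, hv.1]
  have H : ∀ s t : ℝ, max |s + t * β| (|t| * ‖u‖) = max |t + s * γ| (|s| * ‖u''‖) := by
    intro s t
    have e1 : s • v + t • w = (s + t * β) • v + t • u := by
      rw [hwd]; module
    have e2 : s • v + t • w = (t + s * γ) • w + s • u'' := by
      rw [hvd]; module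
    have n1 : ‖s • v + t • w‖ = max |s + t * β| (|t| * ‖u‖) := by
      rw [e1, hv.2.2 _ _ (Submodule.smul_mem _ _ hu), norm_smul, Real.norm_eq_abs]
    have n2 : ‖s • v + t • w‖ = max |t + s * γ| (|s| * ‖u''‖) := by
      rw [e2, hw.2.2 _ _ (Submodule.smul_mem _ _ hu''), norm_smul, Real.norm_eq_abs]
    rw [← n1, n2]
  rcases realKey β γ ‖u‖ ‖u''‖ (norm_nonneg u) (norm_nonneg u'') hn1 hn2 H with hβ | hc
  · rw [hβ] at hwd; rw [hwd, zero_smul, zero_add]; exact hu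
  · exfalso
    rw [norm_eq_zero] at hc
    rw [hc, add_zero] at hwd
    rw [hc, norm_zero, max_eq_left (abs_nonneg β)] at hn1
    rcases (abs_eq (by norm_num : (0:ℝ) ≤ 1)).mp hn1 with hb | hb
    · exact h1 (by rw [hwd, hb, one_smul])
    · exact h2 (by rw [hwd, hb, neg_smul, one_smul])

lemma disjoint_of_maxnorm (v : V) (U : Submodule ℝ V)
    (h : ∀ (α : ℝ), ∀ u ∈ U, ‖α • v + u‖ = max |α| ‖u‖) :
    Disjoint (Submodule.span ℝ {v}) U := by
  rw [Submodule.disjoint_def]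
  intro x hx1 hx2
  obtain ⟨a, rfl⟩ := Submodule.mem_span_singleton.mp hx1
  have h0 := h a (-(a • v)) (neg_mem hx2)
  rw [add_neg_cancel, norm_zero, norm_neg] at h0
  have := le_max_right |a| ‖a • v‖
  rw [← h0] at this
  exact norm_eq_zero.mp (le_antisymm this (norm_nonneg _))

lemma nnnorm_max_of_dir {v : V} {U : Submodule ℝ V}
    (h : ∀ (α : ℝ), ∀ u ∈ U, ‖α • v + u‖ = max |α| ‖u‖)
    (α : ℝ) (u : V) (hu : u ∈ U) : ‖α • v + u‖₊ = ‖α‖₊ ⊔ ‖u‖₊ := by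
  apply NNReal.coe_injective
  rw [coe_nnnorm, NNReal.coe_max, coe_nnnorm, coe_nnnorm, h α u hu, Real.norm_eq_abs]

lemma norm_sum_add {d : ℕ} (v : Fin d → V) (Usub : Fin d → Submodule ℝ V)
    (hdir : ∀ i, IsLinftyDirection (v i) (Usub i))
    (hmem : ∀ i j, i ≠ j → v i ∈ Usub j) :
    ∀ (s : Finset (Fin d)) (α : Fin d → ℝ) (u : V), (∀ i ∈ s, u ∈ Usub i) →
      ‖(∑ i ∈ s, α i • v i) + u‖₊ = (s.sup fun i => ‖α i‖₊) ⊔ ‖u‖₊ := by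
  intro s
  induction s using Finset.induction_on with
  | empty => intro α u hu; simp
  | insert a s ha ih =>
    intro α u hu
    have hx : (∑ i ∈ s, α i • v i) + u ∈ Usub a := by
      refine add_mem (Submodule.sum_mem _ fun i hi => Submodule.smul_mem _ _ ?_)
        (hu a (Finset.mem_insert_self a s))
      exact hmem i a (fun he => ha (he ▸ hi))
    rw [Finset.sum_insert ha, add_assoc,
      nnnorm_max_of_dir (hdir a).2.2 (α a) _ hx,
      ih α u (fun i hi => hu i (Finset.mem_insert_of_mem hi)),
      Finset.sup_insert, sup_assoc]

lemma pi_single_add_nnnorm {n : ℕ} (i : Fin n) (a : ℝ) (z : Fin n → ℝ) (hz : z i = 0) :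
    ‖Pi.single i a + z‖₊ = ‖a‖₊ ⊔ ‖z‖₊ := by
  rw [Pi.nnnorm_def, Pi.nnnorm_def, ← Finset.insert_erase (Finset.mem_univ i),
    Finset.sup_insert, Finset.sup_insert, Pi.add_apply, Pi.single_eq_same, hz, add_zero,
    nnnorm_zero, ← bot_eq_zero, bot_sup_eq]
  congr 1
  refine Finset.sup_congr rfl fun j hj => ?_
  rw [Pi.add_apply, Pi.single_eq_of_ne (Finset.ne_of_mem_erase hj), zero_add]

lemma pi_single_add_norm {n : ℕ} (i : Fin n) (a : ℝ) (z : Fin n → ℝ) (hz : z i = 0) :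
    ‖Pi.single i a + z‖ = max |a| ‖z‖ := by
  rw [← coe_nnnorm, pi_single_add_nnnorm i a z hz, NNReal.coe_max, coe_nnnorm, coe_nnnorm,
    Real.norm_eq_abs]

end Aux

/-- the ℓ∞-decomposition.  Let `v₁, …, v_d` be an enumeration of
all the ℓ∞-directions (pairwise distinct up to sign, and every ℓ∞-direction is some
`±vᵢ`), with corresponding subspaces `U₁, …, U_d`.  Set `W = span{v₁, …, v_d}` and
`U = U₁ ∩ ⋯ ∩ U_d`.  Then `V = U ⊕ W` with `‖u + w‖ = max ‖u‖ ‖w‖`, the subspace `W`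
is isometrically isomorphic to `ℓ∞^d` (here `Fin d → ℝ` with the sup norm), and `W`
is the unique maximal such subspace: any subspace `W'` isometric to some `ℓ∞^{d'}`
admitting a complement `U'` with the max-norm property satisfies `W' ⊆ W`. -/
theorem linfty_decomposition
    {V : Type*} [NormedAddCommGroup V] [NormedSpace ℝ V] [FiniteDimensional ℝ V]
    (d : ℕ) (v : Fin d → V) (Usub : Fin d → Submodule ℝ V)
    (hdir : ∀ i, IsLinftyDirection (v i) (Usub i))
    (hdist : ∀ i j, i ≠ j → v i ≠ v j ∧ v i ≠ -(v j))
    (hall : ∀ (w : V) (Uw : Submodule ℝ V), IsLinftyDirection w Uw →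
      ∃ i, w = v i ∨ w = -(v i))
    (W : Submodule ℝ V) (hW : W = Submodule.span ℝ (Set.range v))
    (U : Submodule ℝ V) (hU : U = ⨅ i, Usub i) :
    IsCompl U W ∧
    (∀ u ∈ U, ∀ w ∈ W, ‖u + w‖ = max ‖u‖ ‖w‖) ∧
    Nonempty (W ≃ₗᵢ[ℝ] (Fin d → ℝ)) ∧
    (∀ (d' : ℕ) (U' W' : Submodule ℝ V), IsCompl U' W' →
      (∀ u ∈ U', ∀ w ∈ W', ‖u + w‖ = max ‖u‖ ‖w‖) →
      Nonempty (W' ≃ₗᵢ[ℝ] (Fin d' → ℝ)) → W' ≤ W) := by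
  have hmem : ∀ i j, i ≠ j → v i ∈ Usub j := fun i j hij =>
    mem_of_ne (hdir j) (hdir i) (hdist i j hij).1 (hdist i j hij).2
  have hsum := norm_sum_add v Usub hdir hmem
  have key : ∀ (α : Fin d → ℝ) (u : V), u ∈ U → ‖(∑ i, α i • v i) + u‖₊ = ‖α‖₊ ⊔ ‖u‖₊ := by
    intro α u hu
    rw [hU, Submodule.mem_iInf] at hu
    rw [hsum Finset.univ α u (fun i _ => hu i), Pi.nnnorm_def]
  have keynorm : ∀ (α : Fin d → ℝ) (u : V), u ∈ U →
      ‖(∑ i, α i • v i) + u‖ = max ‖α‖ ‖u‖ := by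
    intro α u hu
    rw [← coe_nnnorm, key α u hu, NNReal.coe_max, coe_nnnorm, coe_nnnorm]
  have hsumnorm : ∀ (α : Fin d → ℝ), ‖(∑ i, α i • v i)‖ = ‖α‖ := by
    intro α
    have := keynorm α 0 (zero_mem U)
    rwa [add_zero, norm_zero, max_eq_left (norm_nonneg α)] at this
  have hnorm : ∀ u ∈ U, ∀ w ∈ W, ‖u + w‖ = max ‖u‖ ‖w‖ := by
    intro u hu w hw
    rw [hW] at hw
    obtain ⟨α, rfl⟩ := (Submodule.mem_span_range_iff_exists_fun ℝ).mp hw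
    rw [add_comm, keynorm α u hu, hsumnorm α, max_comm]
  have hWmem : ∀ i, v i ∈ W := fun i => hW ▸ Submodule.subset_span ⟨i, rfl⟩
  have hcompl : IsCompl U W := by
    constructor
    · rw [Submodule.disjoint_def]
      intro x hxU hxW
      have h0 := hnorm (-x) (neg_mem hxU) x hxW
      rw [neg_add_cancel, norm_zero, norm_neg, max_self] at h0
      exact norm_eq_zero.mp h0.symm
    · have claim : ∀ s : Finset (Fin d), ∀ x : V, ∃ u : V,
          (∀ i ∈ s, u ∈ Usub i) ∧ x - u ∈ W := by
        intro s
        induction s using Finset.induction_on with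
        | empty => exact fun x => ⟨x, by simp, by rw [sub_self]; exact zero_mem W⟩
        | insert a s ha ih =>
          intro x
          obtain ⟨u, hu1, hu2⟩ := ih x
          obtain ⟨b, u', hu', hdu⟩ := (hdir a).decomp u
          refine ⟨u', fun i hi => ?_, ?_⟩
          · rcases Finset.mem_insert.mp hi with rfl | hi'
            · exact hu'
            · have he : u' = u - b • v a := by rw [hdu]; abel
              rw [he]
              exact sub_mem (hu1 i hi')
                (Submodule.smul_mem _ _ (hmem a i (fun he' => ha (he' ▸ hi'))))
          · have he : x - u' = (x - u) + b • v a := by rw [hdu]; abel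
            rw [he]
            exact add_mem hu2 (Submodule.smul_mem _ _ (hWmem a))
      rw [codisjoint_iff, eq_top_iff]
      intro x _
      obtain ⟨u, hu, hw⟩ := claim Finset.univ x
      have huU : u ∈ U := by
        rw [hU, Submodule.mem_iInf]; exact fun i => hu i (Finset.mem_univ i)
      exact Submodule.mem_sup.mpr ⟨u, huU, x - u, hw, by abel⟩
  refine ⟨hcompl, hnorm, ?_, ?_⟩
  · -- isometry with ℓ∞^d
    have hmemW : ∀ α : Fin d → ℝ, (∑ i, α i • v i) ∈ W :=
      fun α => Submodule.sum_mem _ (fun i _ => Submodule.smul_mem _ _ (hWmem i))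
    let f : (Fin d → ℝ) →ₗ[ℝ] W :=
      { toFun := fun α => (⟨∑ i, α i • v i, hmemW α⟩ : W)
        map_add' := fun α β => Subtype.ext (by
          show (∑ i, (α + β) i • v i) = (∑ i, α i • v i) + ∑ i, β i • v i
          simp [add_smul, Finset.sum_add_distrib])
        map_smul' := fun r α => Subtype.ext (by
          show (∑ i, (r • α) i • v i) = r • ∑ i, α i • v i
          simp [Finset.smul_sum, smul_smul]) }
    let g : (Fin d → ℝ) →ₗᵢ[ℝ] W := ⟨f, fun α => hsumnorm α⟩
    have hsurj : Function.Surjective g := by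
      rintro ⟨w, hw⟩
      have hw' := hw
      rw [hW] at hw'
      obtain ⟨α, hα⟩ := (Submodule.mem_span_range_iff_exists_fun ℝ).mp hw'
      exact ⟨α, Subtype.ext hα⟩
    exact ⟨(LinearIsometryEquiv.ofSurjective g hsurj).symm⟩
  · -- maximality
    rintro d' U' W' hC hN ⟨e⟩
    set wb : Fin d' → W' := fun i => e.symm (Pi.single i 1) with hwb
    have hewb : ∀ i, e (wb i) = Pi.single i 1 := fun i => e.apply_symm_apply _
    have hsingle : ∀ (i : Fin d') (a : ℝ), a • (Pi.single i 1 : Fin d' → ℝ) = Pi.single i a := by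
      intro i a
      rw [← Pi.single_smul, smul_eq_mul, mul_one]
    set Ki : Fin d' → Submodule ℝ W' := fun i =>
      LinearMap.ker ((LinearMap.proj i : (Fin d' → ℝ) →ₗ[ℝ] ℝ) ∘ₗ
        (e.toLinearEquiv : W' →ₗ[ℝ] (Fin d' → ℝ))) with hKi
    have hKimem : ∀ (i : Fin d') (y : W'), y ∈ Ki i ↔ e y i = 0 := by
      intro i y
      simp [hKi, LinearMap.mem_ker]
    have hprop : ∀ i : Fin d', ∀ (α : ℝ), ∀ u ∈ U' ⊔ (Ki i).map W'.subtype,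
        ‖α • (wb i : V) + u‖ = max |α| ‖u‖ := by
      intro i α u hu
      obtain ⟨u', hu', x, hx, rfl⟩ := Submodule.mem_sup.mp hu
      obtain ⟨y, hy, rfl⟩ := Submodule.mem_map.mp hx
      have hy' : e y i = 0 := (hKimem i y).mp hy
      have hWy : α • (wb i : V) + (y : V) ∈ W' :=
        add_mem (Submodule.smul_mem _ _ (wb i).2) y.2
      have e1 : α • (wb i : V) + ((u' : V) + (y : V)) = u' + (α • (wb i : V) + y) := by module
      simp only [Submodule.subtype_apply]
      rw [e1, hN u' hu' _ hWy]
      have e2 : α • (wb i : V) + (y : V) = ((α • wb i + y : W') : V) := by push_cast; ring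
      have e3 : ‖α • (wb i : V) + (y : V)‖ = max |α| ‖(y : V)‖ := by
        rw [e2, Submodule.norm_coe, ← e.norm_map, map_add, map_smul, hewb i, hsingle i α,
          pi_single_add_norm i α (e y) hy', e.norm_map, ← Submodule.norm_coe]
      rw [e3, max_left_comm, hN u' hu' _ y.2]
    have hdir' : ∀ i : Fin d', IsLinftyDirection ((wb i : V)) (U' ⊔ (Ki i).map W'.subtype) := by
      intro i
      refine ⟨?_, ⟨disjoint_of_maxnorm _ _ (hprop i), ?_⟩, hprop i⟩
      · -- norm = 1
        rw [Submodule.norm_coe, ← e.norm_map, hewb i]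
        have := pi_single_add_norm i (1:ℝ) 0 rfl
        rw [add_zero, norm_zero, abs_one, max_eq_left (by norm_num)] at this
        exact this
      · -- codisjoint
        have hWle : W' ≤ Submodule.span ℝ {(wb i : V)} ⊔ (Ki i).map W'.subtype := by
          intro x hx
          refine Submodule.mem_sup.mpr ⟨(e ⟨x, hx⟩ i) • (wb i : V),
            Submodule.smul_mem _ _ (Submodule.mem_span_singleton_self _),
            (((⟨x, hx⟩ : W') - (e ⟨x, hx⟩ i) • wb i : W') : V),
            Submodule.mem_map.mpr ⟨(⟨x, hx⟩ : W') - (e ⟨x, hx⟩ i) • wb i, ?_, rfl⟩, ?_⟩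
          · rw [hKimem]
            rw [map_sub, map_smul, hewb i]
            simp [Pi.single_eq_same]
          · push_cast
            module
        rw [codisjoint_iff, eq_top_iff]
        calc (⊤ : Submodule ℝ V) = U' ⊔ W' := (codisjoint_iff.mp hC.codisjoint).symm
          _ ≤ U' ⊔ (Submodule.span ℝ {(wb i : V)} ⊔ (Ki i).map W'.subtype) :=
              sup_le_sup_left hWle U'
          _ = Submodule.span ℝ {(wb i : V)} ⊔ (U' ⊔ (Ki i).map W'.subtype) := sup_left_comm _ _ _
    have hwiW : ∀ i : Fin d', (wb i : V) ∈ W := by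
      intro i
      obtain ⟨k, hk | hk⟩ := hall _ _ (hdir' i)
      · rw [hk]; exact hWmem k
      · rw [hk]; exact neg_mem (hWmem k)
    intro x hx
    have hexp : (⟨x, hx⟩ : W') = ∑ i, (e ⟨x, hx⟩ i) • wb i := by
      apply e.injective
      rw [map_sum]
      simp only [map_smul, hewb]
      simp only [hsingle]
      exact (Finset.univ_sum_single _).symm
    have hexp' : x = ∑ i, (e ⟨x, hx⟩ i) • (wb i : V) := by
      have := congrArg (Subtype.val) hexp
      simpa using this
    rw [hexp']
    exact Submodule.sum_mem _ fun i _ => Submodule.smul_mem _ _ (hwiW i)
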